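/- Halpern iteration residual rate: let H be a real inner product space, T : H → H nonexpansive (‖T(u) − T(v)‖ ≤ ‖u − v‖ for all u, v), and z⋆ ∈ H a fixed point of T. Given z⁰ ∈ H, define the Halpern iterates z^{k+1} = (1/(k+2))·z⁰ + ((k+1)/(k+2))·T(z^k) for k ≥ 0. Then for every k ≥ 0: ‖z^k − T(z^k)‖ ≤ 2‖z⁰ − z⋆‖/(k+1). -/

import Mathlib

open RealInnerProductSpace

lemma halpern_coco {H : Type*} [NormedAddCommGroup H] [InnerProductSpace ℝ H]
    (T : H → H) (hT : ∀ u v : H, ‖T u - T v‖ ≤ ‖u - v‖) (x y : H) :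
    ‖(x - T x) - (y - T y)‖ ^ 2 ≤ 2 * ⟪(x - T x) - (y - T y), x - y⟫ := by
  have h := hT x y
  have h2 : ‖T x - T y‖ ^ 2 ≤ ‖x - y‖ ^ 2 := by
    have h0 := norm_nonneg (T x - T y)
    nlinarith
  have key : T x - T y = (x - y) - ((x - T x) - (y - T y)) := by abel
  rw [key, norm_sub_sq_real] at h2
  rw [real_inner_comm] at h2
  linarith

/-- **Halpern iteration residual rate.**
Let `H` be a real inner product space, `T : H → H` nonexpansive, and `z⋆` a fixed point of
`T`. Given `z⁰`, the Halpern iterates `z^{k+1} = (1/(k+2))·z⁰ + ((k+1)/(k+2))·T(z^k)` satisfy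
`‖z^k − T(z^k)‖ ≤ 2‖z⁰ − z⋆‖/(k+1)` for every `k ≥ 0`. -/
theorem halpern_residual_rate {H : Type*} [NormedAddCommGroup H] [InnerProductSpace ℝ H]
    (T : H → H) (hT : ∀ u v : H, ‖T u - T v‖ ≤ ‖u - v‖)
    (zstar : H) (hfix : T zstar = zstar)
    (z0 : H) (z : ℕ → H) (h0 : z 0 = z0)
    (hrec : ∀ k : ℕ,
      z (k + 1) = (1 / ((k : ℝ) + 2)) • z0 + (((k : ℝ) + 1) / ((k : ℝ) + 2)) • T (z k)) :
    ∀ k : ℕ, ‖z k - T (z k)‖ ≤ 2 * ‖z0 - zstar‖ / ((k : ℝ) + 1) := by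
  -- the key invariant
  have inv : ∀ k : ℕ, ((k : ℝ) / 2) * ‖z k - T (z k)‖ ^ 2 ≤ ⟪z k - T (z k), z0 - z k⟫ := by
    intro k
    induction k with
    | zero => simp [h0]
    | succ k ih =>
      have hk2 : ((k : ℝ) + 2) ≠ 0 := by positivity
      have hk2' : (0 : ℝ) < (k : ℝ) + 2 := by positivity
      -- vector identities
      have e1 : ((k : ℝ) + 2) • (z (k + 1) - z k)
          = (z0 - z k) - ((k : ℝ) + 1) • (z k - T (z k)) := by
        rw [hrec k]; match_scalars <;> (field_simp; try ring)
      have e2 : ((k : ℝ) + 2) • (z0 - z (k + 1))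
          = ((k : ℝ) + 1) • (z0 - z k) + ((k : ℝ) + 1) • (z k - T (z k)) := by
        rw [hrec k]; match_scalars <;> (field_simp; try ring)
      have hC := halpern_coco T hT (z (k + 1)) (z k)
      -- multiply hC by (k+2)
      have hC2 : ((k : ℝ) + 2) * ‖(z (k+1) - T (z (k+1))) - (z k - T (z k))‖ ^ 2
          ≤ 2 * ⟪(z (k+1) - T (z (k+1))) - (z k - T (z k)),
              (z0 - z k) - ((k : ℝ) + 1) • (z k - T (z k))⟫ := by
        calc ((k : ℝ) + 2) * ‖(z (k+1) - T (z (k+1))) - (z k - T (z k))‖ ^ 2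
            ≤ ((k : ℝ) + 2) * (2 * ⟪(z (k+1) - T (z (k+1))) - (z k - T (z k)),
                z (k+1) - z k⟫) := by
              exact mul_le_mul_of_nonneg_left hC (le_of_lt hk2')
          _ = 2 * ⟪(z (k+1) - T (z (k+1))) - (z k - T (z k)),
                ((k : ℝ) + 2) • (z (k+1) - z k)⟫ := by
              rw [real_inner_smul_right]; ring
          _ = _ := by rw [e1]
      -- reduce goal: multiply by (k+2)
      rw [show ((k + 1 : ℕ) : ℝ) = (k : ℝ) + 1 by push_cast; ring]
      rw [← mul_le_mul_iff_right₀ hk2']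
      have egoal : ((k : ℝ) + 2) * ⟪z (k+1) - T (z (k+1)), z0 - z (k+1)⟫
          = ⟪z (k+1) - T (z (k+1)),
              ((k : ℝ) + 1) • (z0 - z k) + ((k : ℝ) + 1) • (z k - T (z k))⟫ := by
        rw [← e2, real_inner_smul_right]
      rw [egoal]
      -- expand all inner products into scalars
      set u := z (k+1) - T (z (k+1)) with hu
      set v := z k - T (z k) with hv
      set w := z0 - z k with hw
      rw [norm_sub_sq_real] at hC2
      simp only [inner_sub_left, inner_sub_right, inner_add_right, real_inner_smul_right,
        real_inner_self_eq_norm_sq] at hC2 ⊢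
      have h1 := mul_le_mul_of_nonneg_left hC2 (show (0:ℝ) ≤ ((k:ℝ)+1)/2 by positivity)
      have h2 := mul_le_mul_of_nonneg_left ih (show (0:ℝ) ≤ ((k:ℝ)+1) by positivity)
      nlinarith [h1, h2]
  -- conclude
  intro k
  have hC := halpern_coco T hT (z k) zstar
  rw [hfix, sub_self, sub_zero] at hC
  have hinv := inv k
  have hcs : ⟪z k - T (z k), z0 - zstar⟫ ≤ ‖z k - T (z k)‖ * ‖z0 - zstar‖ :=
    real_inner_le_norm _ _
  have hsum : (((k : ℝ) + 1) / 2) * ‖z k - T (z k)‖ ^ 2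
      ≤ ‖z k - T (z k)‖ * ‖z0 - zstar‖ := by
    have : ⟪z k - T (z k), z0 - zstar⟫
        = ⟪z k - T (z k), z k - zstar⟫ + ⟪z k - T (z k), z0 - z k⟫ := by
      rw [← inner_add_right]; congr 1; abel
    nlinarith [hC, hinv, hcs, this]
  have hk1 : (0 : ℝ) < (k : ℝ) + 1 := by positivity
  rcases eq_or_lt_of_le (norm_nonneg (z k - T (z k))) with h | h
  · rw [← h]; positivity
  · rw [le_div_iff₀ hk1]
    nlinarith [hsum, h]
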